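/- There exist a finite DAG D and a non-monotone weight function π : V(D) → ℕ for which the minimum price of a chain partition strictly exceeds the maximum value of a tower of antichains. Concretely, let D have vertices a, b, ab, bc (interpreted as the sets {a}, {b}, {a,b}, {b,c}) with arcs given by proper set inclusion ({a} → {a,b}, {b} → {a,b}, {b} → {b,c}), and let π({a}) = π({b,c}) = z, π({b}) = π({a,b}) = Z where 0 < z < Z < 2z. Then the minimum price of a chain partition of D is 2Z, whereas the maximum value of a tower of antichains of D is Z + z, and 2Z > Z + z. -/

import Mathlib

def IsChainD {V : Type*} (A : V → V → Prop) (C : Finset V) : Prop :=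
  ∀ u ∈ C, ∀ v ∈ C, u ≠ v → Relation.TransGen A u v ∨ Relation.TransGen A v u

def IsAntichainD {V : Type*} (A : V → V → Prop) (N : Finset V) : Prop :=
  ∀ u ∈ N, ∀ v ∈ N, u ≠ v → ¬ Relation.TransGen A u v

def exArc : Fin 4 → Fin 4 → Prop := fun u v =>
  (u = 0 ∧ v = 2) ∨ (u = 1 ∧ v = 2) ∨ (u = 1 ∧ v = 3)

instance : DecidableRel exArc := fun u v => by unfold exArc; exact inferInstance

lemma exArc_trans : Transitive exArc := by
  intro a b c hab hbc
  exfalso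
  rcases hab with ⟨_, rfl⟩ | ⟨_, rfl⟩ | ⟨_, rfl⟩ <;>
    rcases hbc with ⟨h, _⟩ | ⟨h, _⟩ | ⟨h, _⟩ <;> exact absurd h (by decide)

lemma tg_iff (u v : Fin 4) : Relation.TransGen exArc u v ↔ exArc u v := by
  haveI : IsTrans (Fin 4) exArc := ⟨exArc_trans⟩
  rw [Relation.transGen_eq_self]

lemma anti_iff (N : Finset (Fin 4)) :
    IsAntichainD exArc N ↔ ∀ u ∈ N, ∀ v ∈ N, u ≠ v → ¬ exArc u v := by
  unfold IsAntichainD; simp only [tg_iff]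

lemma chain_iff (C : Finset (Fin 4)) :
    IsChainD exArc C ↔ ∀ u ∈ C, ∀ v ∈ C, u ≠ v → exArc u v ∨ exArc v u := by
  unfold IsChainD; simp only [tg_iff]

lemma aux_width : ∀ N : Finset (Fin 4),
    (∀ u ∈ N, ∀ v ∈ N, u ≠ v → ¬ exArc u v) → N.card ≤ 2 := by decide

lemma aux_two : ∀ N : Finset (Fin 4),
    (∀ u ∈ N, ∀ v ∈ N, u ≠ v → ¬ exArc u v) → N.card = 2 →
    (0 ∈ N ∨ 3 ∈ N) := by decide

theorem stmt_18 (z Z : ℕ) (hz : 0 < z) (hzZ : z < Z) (hZ2 : Z < 2 * z) :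
    let π : Fin 4 → ℕ := ![z, Z, Z, z]
    -- the width of the DAG is 2
    ((∀ N : Finset (Fin 4), IsAntichainD exArc N → N.card ≤ 2) ∧
     (∃ N : Finset (Fin 4), IsAntichainD exArc N ∧ N.card = 2)) ∧
    -- the minimum price of a chain partition is 2Z
    ((∀ P : Finset (Finset (Fin 4)), (∀ C ∈ P, IsChainD exArc C) → (∀ C ∈ P, C.Nonempty) →
        (P : Set (Finset (Fin 4))).PairwiseDisjoint id → P.biUnion id = Finset.univ →
        2 * Z ≤ ∑ C ∈ P, C.sup π) ∧
     (∃ P : Finset (Finset (Fin 4)), (∀ C ∈ P, IsChainD exArc C) ∧ (∀ C ∈ P, C.Nonempty) ∧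
        (P : Set (Finset (Fin 4))).PairwiseDisjoint id ∧ P.biUnion id = Finset.univ ∧
        (∑ C ∈ P, C.sup π) = 2 * Z)) ∧
    -- the maximum value of a tower of antichains is Z + z
    ((∀ N : Fin 2 → Finset (Fin 4), (∀ i, IsAntichainD exArc (N i)) →
        (∀ i : Fin 2, (N i).card = (i : ℕ) + 1) →
        (∑ i : Fin 2, sInf (π '' (N i : Set (Fin 4)))) ≤ Z + z) ∧
     (∃ N : Fin 2 → Finset (Fin 4), (∀ i, IsAntichainD exArc (N i)) ∧
        (∀ i : Fin 2, (N i).card = (i : ℕ) + 1) ∧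
        (∑ i : Fin 2, sInf (π '' (N i : Set (Fin 4)))) = Z + z)) ∧
    Z + z < 2 * Z := by
  intro π
  have hπ : π = ![z, Z, Z, z] := rfl
  have hπ0 : π 0 = z := rfl
  have hπ1 : π 1 = Z := rfl
  have hπ2 : π 2 = Z := rfl
  have hπ3 : π 3 = z := rfl
  refine ⟨⟨?_, ?_⟩, ⟨?_, ?_⟩, ⟨?_, ?_⟩, by omega⟩
  · -- width ≤ 2
    intro N hN
    exact aux_width N ((anti_iff N).mp hN)
  · -- antichain of size 2
    exact ⟨{0, 1}, (anti_iff _).mpr (by decide), by decide⟩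
  · -- lower bound on chain partitions
    intro P hchain hne hdisj hcover
    have mem : ∀ v : Fin 4, ∃ C ∈ P, v ∈ C := by
      intro v
      have : v ∈ P.biUnion id := hcover ▸ Finset.mem_univ v
      simpa using Finset.mem_biUnion.mp this
    obtain ⟨C1, hC1P, h1⟩ := mem 1
    obtain ⟨C2, hC2P, h2⟩ := mem 2
    obtain ⟨C0, hC0P, h0⟩ := mem 0
    obtain ⟨C3, hC3P, h3⟩ := mem 3
    have key : ∀ C ∈ P, ∀ u ∈ C, π u ≤ C.sup π := fun C _ u hu => Finset.le_sup hu
    by_cases hC : C1 = C2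
    · -- 1 and 2 in same chain; then C0, C3, C1 pairwise distinct
      subst hC
      have hne01 : C0 ≠ C1 := by
        rintro rfl
        have := (chain_iff C0).mp (hchain C0 hC0P) 0 h0 1 h1 (by decide)
        revert this; decide
      have hne31 : C3 ≠ C1 := by
        rintro rfl
        have := (chain_iff C3).mp (hchain C3 hC3P) 2 h2 3 h3 (by decide)
        revert this; decide
      have hne03 : C0 ≠ C3 := by
        rintro rfl
        have := (chain_iff C0).mp (hchain C0 hC0P) 0 h0 3 h3 (by decide)
        revert this; decide
      have hsub : ({C1, C0, C3} : Finset (Finset (Fin 4))) ⊆ P := by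
        intro C hC
        simp only [Finset.mem_insert, Finset.mem_singleton] at hC
        rcases hC with rfl | rfl | rfl <;> assumption
      have hsum : ∑ C ∈ ({C1, C0, C3} : Finset (Finset (Fin 4))), C.sup π
          ≤ ∑ C ∈ P, C.sup π := Finset.sum_le_sum_of_subset hsub
      rw [Finset.sum_insert (by simp [Ne.symm hne01, Ne.symm hne31]),
        Finset.sum_insert (by simp [hne03]), Finset.sum_singleton] at hsum
      have e1 := key C1 hC1P 1 h1
      have e0 := key C0 hC0P 0 h0
      have e3 := key C3 hC3P 3 h3
      rw [hπ1] at e1; rw [hπ0] at e0; rw [hπ3] at e3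
      omega
    · have hsub : ({C1, C2} : Finset (Finset (Fin 4))) ⊆ P := by
        intro C hCm
        simp only [Finset.mem_insert, Finset.mem_singleton] at hCm
        rcases hCm with rfl | rfl <;> assumption
      have hsum : ∑ C ∈ ({C1, C2} : Finset (Finset (Fin 4))), C.sup π
          ≤ ∑ C ∈ P, C.sup π := Finset.sum_le_sum_of_subset hsub
      rw [Finset.sum_pair hC] at hsum
      have e1 := key C1 hC1P 1 h1
      have e2 := key C2 hC2P 2 h2
      rw [hπ1] at e1; rw [hπ2] at e2
      omega
  · -- optimal chain partition {{0,2},{1,3}}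
    refine ⟨{{0, 2}, {1, 3}}, ?_, ?_, ?_, by decide, ?_⟩
    · intro C hC
      simp only [Finset.mem_insert, Finset.mem_singleton] at hC
      rcases hC with rfl | rfl <;> exact (chain_iff _).mpr (by decide)
    · intro C hC
      simp only [Finset.mem_insert, Finset.mem_singleton] at hC
      rcases hC with rfl | rfl <;> exact ⟨_, Finset.mem_insert_self _ _⟩
    · intro C hCm D hDm hne
      simp only [Finset.coe_insert, Finset.coe_singleton, Set.mem_insert_iff,
        Set.mem_singleton_iff] at hCm hDm
      rcases hCm with rfl | rfl <;> rcases hDm with rfl | rfl <;>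
        first | exact absurd rfl hne | (apply Finset.disjoint_left.mpr; decide)
    · have hne : ({0, 2} : Finset (Fin 4)) ≠ {1, 3} := by decide
      rw [Finset.sum_pair hne]
      have s1 : ({0, 2} : Finset (Fin 4)).sup π = max z Z := by
        simp [hπ, Finset.sup_insert, Finset.sup_singleton]
      have s2 : ({1, 3} : Finset (Fin 4)).sup π = max Z z := by
        simp [hπ, Finset.sup_insert, Finset.sup_singleton]
      rw [s1, s2]
      omega
  · -- tower upper bound
    intro N hanti hcard
    rw [Fin.sum_univ_two]
    have hb0 : sInf (π '' (N 0 : Set (Fin 4))) ≤ Z := by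
      obtain ⟨v, hv⟩ := Finset.card_eq_one.mp (by simpa using hcard 0)
      have hvm : v ∈ N 0 := hv ▸ Finset.mem_singleton_self v
      have : sInf (π '' (N 0 : Set (Fin 4))) ≤ π v :=
        Nat.sInf_le ⟨v, by simpa using hvm, rfl⟩
      have hpv : π v ≤ Z := by fin_cases v <;> simp [hπ] <;> omega
      omega
    have hb1 : sInf (π '' (N 1 : Set (Fin 4))) ≤ z := by
      have h03 := aux_two (N 1) ((anti_iff _).mp (hanti 1)) (by simpa using hcard 1)
      rcases h03 with h | h
      · have : sInf (π '' (N 1 : Set (Fin 4))) ≤ π 0 :=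
          Nat.sInf_le ⟨0, by simpa using h, rfl⟩
        omega
      · have : sInf (π '' (N 1 : Set (Fin 4))) ≤ π 3 :=
          Nat.sInf_le ⟨3, by simpa using h, rfl⟩
        omega
    omega
  · -- optimal tower
    refine ⟨![{1}, {0, 1}], ?_, ?_, ?_⟩
    · intro i
      fin_cases i <;> exact (anti_iff _).mpr (by decide)
    · intro i; fin_cases i <;> decide
    · rw [Fin.sum_univ_two]
      have e0 : π '' ((![({1} : Finset (Fin 4)), {0, 1}] : Fin 2 → Finset (Fin 4)) 0 :
          Set (Fin 4)) = {Z} := by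
        simp [hπ]
      have e1 : π '' ((![({1} : Finset (Fin 4)), {0, 1}] : Fin 2 → Finset (Fin 4)) 1 :
          Set (Fin 4)) = {z, Z} := by
        simp [hπ, Set.image_insert_eq]
      rw [e0, e1, csInf_singleton]
      have : sInf ({z, Z} : Set ℕ) = z := by
        refine le_antisymm (Nat.sInf_le (by left; rfl)) (le_csInf ⟨z, Or.inl rfl⟩ ?_)
        rintro b (rfl | rfl) <;> omega
      omega
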